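/- Let D be an ordinary Dyck sequence and let φ₁(D) = (E,F,G). Then area(E ⧺ F ⧺ G) = area(D) and dinv(E ⧺ F ⧺ G) − len(E) = dinv(D), where ⧺ denotes concatenation. -/

import Mathlib

/-- A finite integer sequence is an *affine Dyck sequence* if each entry is at
most the previous entry plus 1. -/
def AffineDyck (x : List ℤ) : Prop := List.Chain' (fun a b => b ≤ a + 1) x

/-- A finite integer sequence is a *reverse Dyck sequence* if each entry is at
least the previous entry minus 1. -/
def ReverseDyck (x : List ℤ) : Prop := List.Chain' (fun a b => a - 1 ≤ b) x

/-- An *ordinary Dyck sequence* is a nonempty affine Dyck sequence starting at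
`0` with all entries nonnegative. -/
def OrdDyck (x : List ℤ) : Prop :=
  x ≠ [] ∧ AffineDyck x ∧ x.getD 0 0 = 0 ∧ ∀ a ∈ x, 0 ≤ a

/-- An index `j` of `C` is *eligible* if there is exactly one index `i < j`
with `C i = C j − 1`, and either `j` is the final index or the next entry is
at most `C j`. -/
def Eligible (C : List ℤ) (j : ℕ) : Prop :=
  j < C.length ∧
  ((Finset.range j).filter (fun i => C.getD i 0 = C.getD j 0 - 1)).card = 1 ∧
  (j + 1 = C.length ∨ C.getD (j + 1) 0 ≤ C.getD j 0)

instance (C : List ℤ) (j : ℕ) : Decidable (Eligible C j) := by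
  unfold Eligible; infer_instance

/-- A *Dyck `m`-skeleton*: an ordinary Dyck sequence with maximum `m`, whose
last entry equals `m`, having no eligible index other than possibly the final
one. -/
def DyckSkeleton (m : ℤ) (F : List ℤ) : Prop :=
  OrdDyck F ∧ (∀ a ∈ F, a ≤ m) ∧ F.getLast? = some m ∧
  ∀ j, Eligible F j → j + 1 = F.length

/-- The leftmost eligible index of `C` that is not the final index. -/
def eligNF? (C : List ℤ) : Option ℕ :=
  (List.range C.length).find? (fun j => decide (Eligible C j ∧ j + 1 ≠ C.length))

/-- The extraction loop: while the current sequence has a nonfinal eligible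
index, remove the entry at the leftmost such index and append the removed
value to the output `E`. -/
def extractAux : ℕ → List ℤ → List ℤ → List ℤ × List ℤ
  | 0, E, C => (E, C)
  | fuel + 1, E, C =>
    match eligNF? C with
    | none => (E, C)
    | some j => extractAux fuel (E ++ [C.getD j 0]) (C.eraseIdx j)

/-- The map `φ₁`: split `D` after its last maximum into `C` and `G`, fully
extract nonfinal extractable entries of `C` into `E`, and return the
resulting triple `(E, F, G)`. -/
def phi1 (D : List ℤ) : List ℤ × List ℤ × List ℤ :=
  let m := D.foldr max 0
  let k := D.length - 1 - D.reverse.findIdx (fun a => decide (a = m))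
  let EF := extractAux (k + 1) [] (D.take (k + 1))
  (EF.1, EF.2, D.drop (k + 1))

/-- `di x` is the number of pairs `i < j` with `x i = x j + 1`. -/
def di (x : List ℤ) : ℕ :=
  ((Finset.range x.length ×ˢ Finset.range x.length).filter
    (fun p => p.1 < p.2 ∧ x.getD p.1 0 = x.getD p.2 0 + 1)).card

/-- `nv x` is the number of pairs `i < j` with `x i = x j`. -/
def nv (x : List ℤ) : ℕ :=
  ((Finset.range x.length ×ˢ Finset.range x.length).filter
    (fun p => p.1 < p.2 ∧ x.getD p.1 0 = x.getD p.2 0)).card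

/-- `dinv x = di x + nv x`. -/
def dinv (x : List ℤ) : ℕ := di x + nv x

/-- `area x` is the sum of the entries of `x`. -/
def area (x : List ℤ) : ℤ := x.sum

namespace PhiAux

lemma affine_getD {C : List ℤ} (h : AffineDyck C) {i : ℕ} (hi : i + 1 < C.length) :
    C.getD (i+1) 0 ≤ C.getD i 0 + 1 := by
  rw [List.getD_eq_getElem _ _ hi, List.getD_eq_getElem _ _ (by omega)]
  have := List.isChain_iff_getElem.mp h i (by omega)
  simpa [List.get_eq_getElem] using this

lemma affine_of_getD {C : List ℤ}
    (h : ∀ i, i + 1 < C.length → C.getD (i+1) 0 ≤ C.getD i 0 + 1) : AffineDyck C := by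
  rw [AffineDyck]; refine List.isChain_iff_getElem.mpr ?_
  intro i hi
  have := h i (by omega)
  rw [List.getD_eq_getElem _ _ (by omega), List.getD_eq_getElem _ _ (by omega)] at this
  simpa [List.get_eq_getElem] using this

lemma ivt {C : List ℤ} (hA : AffineDyck C) (h0 : C.getD 0 0 = 0) :
    ∀ s, s < C.length → ∀ u : ℤ, 0 ≤ u → u < C.getD s 0 → ∃ r, r < s ∧ C.getD r 0 = u := by
  intro s
  induction s with
  | zero => intro _ u hu hlt; rw [h0] at hlt; omega
  | succ t ih =>
    intro hs u hu hlt
    have hstep := affine_getD hA hs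
    rcases lt_trichotomy (C.getD t 0) u with h | h | h
    · omega
    · exact ⟨t, Nat.lt_succ_self t, h⟩
    · obtain ⟨r, hr, hre⟩ := ih (by omega) u hu h
      exact ⟨r, by omega, hre⟩

lemma climb {C : List ℤ} (hC : OrdDyck C) {q : ℕ} (hq : q < C.length) :
    ∀ k t, q ≤ t + k → t < q →
    C.getD q 0 ≤ C.getD t 0 →
    (∀ s, s < t → C.getD s 0 ≠ C.getD t 0) →
    ((Finset.range t).filter (fun i => C.getD i 0 = C.getD t 0 - 1)).card = 1 →
    ∃ t', t' < q ∧ Eligible C t' ∧ t' + 1 ≠ C.length := by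
  intro k
  induction k with
  | zero => intro t h1 h2 _ _ _; omega
  | succ k ih =>
    intro t hk ht hwt hJ hK
    have ht1 : t + 1 < C.length := by omega
    have hstep := affine_getD hC.2.1 ht1
    by_cases hc : C.getD (t+1) 0 ≤ C.getD t 0
    · exact ⟨t, ht, ⟨by omega, hK, Or.inr hc⟩, by omega⟩
    · have heq : C.getD (t+1) 0 = C.getD t 0 + 1 := by omega
      have htq : t + 1 < q := by
        rcases Nat.lt_or_ge (t+1) q with h | h
        · exact h
        · exfalso
          have h' : t + 1 = q := by omega
          rw [h'] at heq; omega
      have hnn : (0:ℤ) ≤ C.getD t 0 := by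
        rw [List.getD_eq_getElem _ _ (by omega : t < C.length)]
        exact hC.2.2.2 _ (List.getElem_mem _)
      have hJ' : ∀ s, s < t + 1 → C.getD s 0 ≠ C.getD (t+1) 0 := by
        intro s hs hcon
        rw [heq] at hcon
        rcases Nat.lt_or_ge s t with h | h
        · obtain ⟨r, hr, hre⟩ := ivt hC.2.1 hC.2.2.1 s (by omega) (C.getD t 0) hnn (by omega)
          exact hJ r (by omega) hre
        · have hst : s = t := by omega
          rw [hst] at hcon; omega
      have hK' : ((Finset.range (t+1)).filter
          (fun i => C.getD i 0 = C.getD (t+1) 0 - 1)).card = 1 := by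
        have hset : (Finset.range (t+1)).filter (fun i => C.getD i 0 = C.getD (t+1) 0 - 1)
            = {t} := by
          ext s
          simp only [Finset.mem_filter, Finset.mem_range, Finset.mem_singleton]
          constructor
          · rintro ⟨hs, hse⟩
            by_contra hne
            exact hJ s (by omega) (by rw [heq] at hse; omega)
          · rintro rfl
            refine ⟨by omega, by rw [heq]; ring⟩
        rw [hset]; rfl
      exact ih (t+1) (by omega) htq (by omega) hJ' hK'

lemma eligNF?_spec {C : List ℤ} {j : ℕ} (h : eligNF? C = some j) :
    Eligible C j ∧ j + 1 ≠ C.length ∧ ∀ t, t < j → ¬(Eligible C t ∧ t + 1 ≠ C.length) := by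
  unfold eligNF? at h
  rw [List.find?_eq_some_iff_getElem] at h
  obtain ⟨hpj, i, hi, hij, hlt⟩ := h
  rw [List.getElem_range] at hij
  subst hij
  simp only [decide_eq_true_eq] at hpj
  refine ⟨hpj.1, hpj.2, ?_⟩
  intro t htj hcon
  have := hlt t htj
  simp only [List.getElem_range, Bool.not_eq_true', decide_eq_false_iff_not] at this
  exact this hcon

lemma no_earlier_eq {C : List ℤ} (hC : OrdDyck C) {j : ℕ} (h : eligNF? C = some j) :
    ∀ i, i < j → C.getD i 0 ≠ C.getD j 0 := by
  obtain ⟨hel, hnf, hmin⟩ := eligNF?_spec h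
  intro i hij hcon
  have hjlen : j < C.length := hel.1
  -- w ≥ 1
  have hw1 : 1 ≤ C.getD j 0 := by
    obtain ⟨a, ha⟩ := Finset.card_eq_one.mp hel.2.1
    have hmem : a ∈ (Finset.range j).filter (fun i => C.getD i 0 = C.getD j 0 - 1) := by
      rw [ha]; exact Finset.mem_singleton_self a
    rw [Finset.mem_filter, Finset.mem_range] at hmem
    have : (0:ℤ) ≤ C.getD a 0 := by
      rw [List.getD_eq_getElem _ _ (by omega : a < C.length)]
      exact hC.2.2.2 _ (List.getElem_mem _)
    omega
  -- least occurrence of w strictly before j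
  have hex : ∃ i, i < j ∧ C.getD i 0 = C.getD j 0 := ⟨i, hij, hcon⟩
  classical
  set i0 := Nat.find hex with hi0
  obtain ⟨hi0j, hi0e⟩ := Nat.find_spec hex
  have hJ : ∀ s, s < i0 → C.getD s 0 ≠ C.getD i0 0 := by
    intro s hs hcon2
    exact Nat.find_min hex hs ⟨by omega, by rw [hcon2, hi0e]⟩
  have hK : ((Finset.range i0).filter (fun t => C.getD t 0 = C.getD i0 0 - 1)).card = 1 := by
    have hsub : (Finset.range i0).filter (fun t => C.getD t 0 = C.getD i0 0 - 1) ⊆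
        (Finset.range j).filter (fun t => C.getD t 0 = C.getD j 0 - 1) := by
      intro s hs
      rw [Finset.mem_filter, Finset.mem_range] at hs ⊢
      exact ⟨by omega, by rw [← hi0e]; exact hs.2⟩
    have hle := Finset.card_le_card hsub
    rw [hel.2.1] at hle
    have hne : ((Finset.range i0).filter (fun t => C.getD t 0 = C.getD i0 0 - 1)).Nonempty := by
      obtain ⟨r, hr, hre⟩ := ivt hC.2.1 hC.2.2.1 i0 (by omega) (C.getD j 0 - 1) (by omega)
        (by rw [hi0e]; omega)
      exact ⟨r, by rw [Finset.mem_filter, Finset.mem_range]; exact ⟨hr, by rw [hi0e]; exact hre⟩⟩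
    have := Finset.card_pos.mpr hne
    omega
  obtain ⟨t', ht'q, ht'el, ht'nf⟩ := climb hC hjlen (j - i0) i0 (by omega) hi0j
    (by rw [hi0e]) hJ hK
  exact hmin t' ht'q ⟨ht'el, ht'nf⟩

lemma no_earlier_succ {C : List ℤ} (hC : OrdDyck C) {j : ℕ} (h : eligNF? C = some j) :
    ∀ i, i < j → C.getD i 0 ≠ C.getD j 0 + 1 := by
  intro i hij hcon
  have hjlen : j < C.length := (eligNF?_spec h).1.1
  have hnn : (0:ℤ) ≤ C.getD j 0 := by
    rw [List.getD_eq_getElem _ _ hjlen]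
    exact hC.2.2.2 _ (List.getElem_mem _)
  obtain ⟨r, hr, hre⟩ := ivt hC.2.1 hC.2.2.1 i (by omega) (C.getD j 0) hnn (by omega)
  exact no_earlier_eq hC h r (by omega) hre

/-- counting conversion -/
lemma card_filter_range_eq_countP (C : List ℤ) (p : ℤ → Prop) [DecidablePred p] :
    ∀ j, j ≤ C.length →
      ((Finset.range j).filter (fun i => p (C.getD i 0))).card
        = (C.take j).countP (fun b => decide (p b)) := by
  intro j
  induction j with
  | zero => simp
  | succ t ih =>
    intro h
    rw [Finset.range_add_one, Finset.filter_insert]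
    have htake : C.take (t+1) = C.take t ++ [C.getD t 0] := by
      rw [List.take_succ, List.getElem?_eq_getElem (by omega : t < C.length),
        List.getD_eq_getElem _ _ (by omega : t < C.length)]
      rfl
    rw [htake, List.countP_append]
    by_cases hp : p (C.getD t 0)
    · rw [if_pos hp, Finset.card_insert_of_notMem (by simp), ih (by omega)]
      have hgd : (C[t]?).getD 0 = C.getD t 0 := rfl
      simp only [List.countP_cons, List.countP_nil, List.getD]
      rw [hgd, if_pos (decide_eq_true hp)]
    · rw [if_neg hp, ih (by omega)]
      have hgd : (C[t]?).getD 0 = C.getD t 0 := rfl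
      simp only [List.countP_cons, List.countP_nil, List.getD]
      rw [hgd, if_neg (by simpa using hp)]
      omega

def dstep (a : ℤ) (l : List ℤ) : ℕ := l.countP (fun b => decide (a = b + 1 ∨ a = b))

def dl : List ℤ → ℕ
  | [] => 0
  | a :: l => dstep a l + dl l

def cross (A B : List ℤ) : ℕ := (A.map (fun a => dstep a B)).sum

lemma dstep_append (a : ℤ) (B1 B2 : List ℤ) :
    dstep a (B1 ++ B2) = dstep a B1 + dstep a B2 := List.countP_append

lemma cross_cons_left' (v : ℤ) (A B : List ℤ) :
    cross (v :: A) B = dstep v B + cross A B := by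
  simp [cross]

lemma dl_append : ∀ A B : List ℤ, dl (A ++ B) = dl A + dl B + cross A B
  | [], B => by simp [dl, cross]
  | a :: A, B => by
    show dstep a (A ++ B) + dl (A ++ B) = (dstep a A + dl A) + dl B + cross (a :: A) B
    rw [dl_append A B, dstep_append, cross_cons_left']
    omega

lemma cross_append_right (A B1 B2 : List ℤ) :
    cross A (B1 ++ B2) = cross A B1 + cross A B2 := by
  induction A with
  | nil => simp [cross]
  | cons a A ih =>
    simp only [cross, List.map_cons, List.sum_cons, dstep_append] at *
    omega

lemma cross_append_left (A1 A2 B : List ℤ) :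
    cross (A1 ++ A2) B = cross A1 B + cross A2 B := by
  simp [cross, List.map_append]

lemma cross_cons_left (v : ℤ) (A B : List ℤ) :
    cross (v :: A) B = dstep v B + cross A B := by
  simp [cross]

lemma cross_nil_left (B : List ℤ) : cross [] B = 0 := rfl
lemma cross_nil_right (A : List ℤ) : cross A [] = 0 := by
  simp [cross, dstep]

lemma dl_nil : dl [] = 0 := rfl
lemma dl_singleton (v : ℤ) : dl [v] = 0 := by simp [dl, dstep]

lemma cross_singleton_left (v : ℤ) (B : List ℤ) : cross [v] B = dstep v B := by
  simp [cross]

lemma cross_singleton_right (P : List ℤ) (v : ℤ) :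
    cross P [v] = P.countP (fun a => decide (a = v + 1 ∨ a = v)) := by
  induction P with
  | nil => rfl
  | cons a P ih =>
    rw [cross_cons_left, ih, List.countP_cons]
    have : dstep a [v] = if decide (a = v + 1 ∨ a = v) = true then 1 else 0 := by
      simp only [dstep, List.countP_cons, List.countP_nil]
      omega
    omega

lemma countP_split (l : List ℤ) (v : ℤ) :
    l.countP (fun b => decide (v = b + 1 ∨ v = b))
      = l.countP (fun b => decide (b = v - 1)) + l.countP (fun b => decide (b = v)) := by
  induction l with
  | nil => rfl
  | cons a l ih =>
    simp only [List.countP_cons, ih, decide_eq_true_eq]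
    split_ifs <;> omega

lemma countP_split2 (l : List ℤ) (v : ℤ) :
    l.countP (fun a => decide (a = v + 1 ∨ a = v))
      = l.countP (fun b => decide (b = v + 1)) + l.countP (fun b => decide (b = v)) := by
  induction l with
  | nil => rfl
  | cons a l ih =>
    simp only [List.countP_cons, ih, decide_eq_true_eq]
    split_ifs <;> omega

/-- `dinv` as a sum over the second index. -/
lemma dinv_eq_sum (x : List ℤ) :
    dinv x = ∑ j ∈ Finset.range x.length,
      (x.take j).countP (fun b => decide (b = x.getD j 0 + 1 ∨ b = x.getD j 0)) := by
  classical
  unfold dinv di nv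
  rw [← Finset.card_union_of_disjoint]
  swap
  · rw [Finset.disjoint_filter]
    rintro p _ ⟨_, h1⟩ ⟨_, h2⟩
    omega
  rw [← Finset.filter_or]
  have hcongr : ((Finset.range x.length ×ˢ Finset.range x.length).filter
      (fun p => (p.1 < p.2 ∧ x.getD p.1 0 = x.getD p.2 0 + 1) ∨
        (p.1 < p.2 ∧ x.getD p.1 0 = x.getD p.2 0))) =
      ((Finset.range x.length ×ˢ Finset.range x.length).filter
      (fun p => p.1 < p.2 ∧ (x.getD p.1 0 = x.getD p.2 0 + 1 ∨ x.getD p.1 0 = x.getD p.2 0))) := by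
    apply Finset.filter_congr
    intro p _
    constructor
    · rintro (⟨h1, h2⟩ | ⟨h1, h2⟩) <;> exact ⟨h1, by tauto⟩
    · rintro ⟨h1, h2 | h2⟩
      · exact Or.inl ⟨h1, h2⟩
      · exact Or.inr ⟨h1, h2⟩
  rw [hcongr, Finset.card_filter, Finset.sum_product_right]
  apply Finset.sum_congr rfl
  intro j hj
  rw [Finset.mem_range] at hj
  have hsum : ∑ i ∈ Finset.range x.length,
      (if i < j ∧ (x.getD i 0 = x.getD j 0 + 1 ∨ x.getD i 0 = x.getD j 0) then 1 else 0)
      = ∑ i ∈ Finset.range j,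
      (if (x.getD i 0 = x.getD j 0 + 1 ∨ x.getD i 0 = x.getD j 0) then 1 else 0) := by
    have h1 : ∑ i ∈ Finset.range x.length,
        (if i < j ∧ (x.getD i 0 = x.getD j 0 + 1 ∨ x.getD i 0 = x.getD j 0) then 1 else 0)
        = ∑ i ∈ Finset.range j,
        (if i < j ∧ (x.getD i 0 = x.getD j 0 + 1 ∨ x.getD i 0 = x.getD j 0) then 1 else 0) := by
      refine (Finset.sum_subset (Finset.range_subset_range.mpr (by omega : j ≤ x.length)) ?_).symm
      intro i _ hi
      rw [Finset.mem_range] at hi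
      exact if_neg (fun h => hi h.1)
    rw [h1]
    apply Finset.sum_congr rfl
    intro i hi
    rw [Finset.mem_range] at hi
    congr 1
    simp [hi]
  rw [hsum, ← Finset.card_filter]
  exact card_filter_range_eq_countP x
    (fun b => b = x.getD j 0 + 1 ∨ b = x.getD j 0) j (by omega)

lemma dinv_eq_dl (x : List ℤ) : dinv x = dl x := by
  induction x using List.reverseRecOn with
  | nil => rfl
  | append_singleton l a ih =>
    rw [dinv_eq_sum, dl_append, dl_singleton, cross_singleton_right]
    have hlen : (l ++ [a]).length = l.length + 1 := by simp
    rw [hlen, Finset.sum_range_succ]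
    have hlast : ((l ++ [a]).take l.length).countP
        (fun b => decide (b = (l ++ [a]).getD l.length 0 + 1 ∨ b = (l ++ [a]).getD l.length 0))
        = l.countP (fun b => decide (b = a + 1 ∨ b = a)) := by
      rw [List.take_append_of_le_length (le_refl _), List.take_length,
        List.getD_eq_getElem _ _ (by simp : l.length < (l ++ [a]).length),
        List.getElem_append_right (le_refl _)]
      simp
    have hrest : ∀ j ∈ Finset.range l.length,
        ((l ++ [a]).take j).countP
          (fun b => decide (b = (l ++ [a]).getD j 0 + 1 ∨ b = (l ++ [a]).getD j 0))
        = (l.take j).countP (fun b => decide (b = l.getD j 0 + 1 ∨ b = l.getD j 0)) := by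
      intro j hj
      rw [Finset.mem_range] at hj
      rw [List.take_append_of_le_length (by omega),
        List.getD_eq_getElem _ _ (by simp; omega : j < (l ++ [a]).length),
        List.getElem_append_left hj, ← List.getD_eq_getElem l _ hj]
    rw [Finset.sum_congr rfl hrest, hlast, ← dinv_eq_sum, ih]
    omega

lemma eligible_pos {C : List ℤ} {j : ℕ} (hel : Eligible C j) : 1 ≤ j := by
  by_contra h
  have hj0 : j = 0 := by omega
  have := hel.2.1
  rw [hj0] at this
  simp at this

lemma ordDyck_eraseIdx {C : List ℤ} (hC : OrdDyck C) {j : ℕ}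
    (hel : Eligible C j) (hnf : j + 1 ≠ C.length) : OrdDyck (C.eraseIdx j) := by
  obtain ⟨hne, hA, h0, hpos⟩ := hC
  have hj1 : 1 ≤ j := eligible_pos hel
  have hjlen : j + 1 < C.length := by have := hel.1; omega
  have hlen : (C.eraseIdx j).length = C.length - 1 :=
    List.length_eraseIdx_of_lt hel.1
  have hget : ∀ i, i < (C.eraseIdx j).length →
      (C.eraseIdx j).getD i 0 = if i < j then C.getD i 0 else C.getD (i+1) 0 := by
    intro i hi
    have hi' : i < C.length - 1 := by rw [← hlen]; exact hi
    rw [List.getD_eq_getElem _ _ hi]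
    by_cases h : i < j
    · rw [List.getElem_eraseIdx_of_lt hi h, if_pos h,
        List.getD_eq_getElem _ _ (by omega : i < C.length)]
    · rw [List.getElem_eraseIdx_of_ge hi (by omega), if_neg h,
        List.getD_eq_getElem _ _ (by omega : i + 1 < C.length)]
  refine ⟨?_, ?_, ?_, ?_⟩
  · intro h
    have := congrArg List.length h
    rw [hlen] at this
    simp at this
    omega
  · apply affine_of_getD
    intro i hi
    have hi' : i + 1 < C.length - 1 := by rw [← hlen]; exact hi
    rw [hget i (by omega), hget (i+1) (by omega)]
    by_cases h1 : i + 1 < j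
    · rw [if_pos h1, if_pos (show i < j by omega)]
      exact affine_getD hA (by omega)
    · by_cases h2 : i + 1 = j
      · rw [if_neg (by omega : ¬ i + 1 < j), if_pos (show i < j by omega)]
        have hc2 : C.getD (j+1) 0 ≤ C.getD j 0 := by
          rcases hel.2.2 with h | h
          · omega
          · exact h
        have ha := affine_getD hA (show i + 1 < C.length by omega)
        have hij : i + 1 + 1 = j + 1 := by omega
        rw [hij]
        rw [h2] at ha
        omega
      · rw [if_neg (by omega : ¬ i + 1 < j), if_neg (show ¬ i < j by omega)]
        exact affine_getD hA (by omega)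
  · rw [hget 0 (by omega), if_pos (by omega)]
    exact h0
  · intro a ha
    exact hpos a ((List.eraseIdx_sublist C j).mem ha)

lemma step_facts {C : List ℤ} (hC : OrdDyck C) {j : ℕ} (h : eligNF? C = some j) :
    dstep (C.getD j 0) (C.take j) = 1 ∧
    cross (C.take j) [C.getD j 0] = 0 := by
  obtain ⟨hel, hnf, _⟩ := eligNF?_spec h
  have hjlen : j < C.length := hel.1
  set v := C.getD j 0 with hv
  have hc1 : (C.take j).countP (fun b => decide (b = v - 1)) = 1 := by
    rw [← card_filter_range_eq_countP C (fun b => b = v - 1) j (by omega)]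
    exact hel.2.1
  have hc2 : (C.take j).countP (fun b => decide (b = v)) = 0 := by
    rw [← card_filter_range_eq_countP C (fun b => b = v) j (by omega)]
    rw [Finset.card_eq_zero, Finset.filter_eq_empty_iff]
    intro i hi
    rw [Finset.mem_range] at hi
    exact no_earlier_eq hC h i hi
  have hc3 : (C.take j).countP (fun b => decide (b = v + 1)) = 0 := by
    rw [← card_filter_range_eq_countP C (fun b => b = v + 1) j (by omega)]
    rw [Finset.card_eq_zero, Finset.filter_eq_empty_iff]
    intro i hi
    rw [Finset.mem_range] at hi
    exact no_earlier_succ hC h i hi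
  constructor
  · rw [dstep, countP_split, hc1, hc2]
  · rw [cross_singleton_right, countP_split2, hc2, hc3]

lemma step_eq (E G : List ℤ) {C : List ℤ} (hC : OrdDyck C) {j : ℕ} (h : eligNF? C = some j) :
    dl ((E ++ [C.getD j 0]) ++ C.eraseIdx j ++ G) = dl (E ++ C ++ G) + 1 ∧
    ((E ++ [C.getD j 0]) ++ C.eraseIdx j ++ G).sum = (E ++ C ++ G).sum := by
  obtain ⟨hel, hnf, _⟩ := eligNF?_spec h
  have hjlen : j < C.length := hel.1
  obtain ⟨hd1, hd0⟩ := step_facts hC h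
  have hCsplit : C = C.take j ++ [C.getD j 0] ++ C.drop (j+1) := by
    conv_lhs => rw [← List.take_append_drop j C]
    rw [List.drop_eq_getElem_cons hjlen, List.getD_eq_getElem _ _ hjlen,
      List.append_assoc, List.singleton_append]
  have hesplit : C.eraseIdx j = C.take j ++ C.drop (j+1) :=
    List.eraseIdx_eq_take_drop_succ C j
  rw [hesplit]
  constructor
  · rw [show E ++ C ++ G = E ++ (C.take j ++ [C.getD j 0] ++ C.drop (j+1)) ++ G from by
      rw [← hCsplit]]
    simp only [List.append_assoc, dl_append, cross_append_right, cross_append_left,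
      dl_singleton, cross_singleton_left]
    omega
  · rw [show E ++ C ++ G = E ++ (C.take j ++ [C.getD j 0] ++ C.drop (j+1)) ++ G from by
      rw [← hCsplit]]
    simp only [List.append_assoc, List.sum_append]
    omega

lemma loop (G : List ℤ) : ∀ fuel (E C : List ℤ), OrdDyck C →
    ((extractAux fuel E C).1 ++ (extractAux fuel E C).2 ++ G).sum = (E ++ C ++ G).sum ∧
    dl ((extractAux fuel E C).1 ++ (extractAux fuel E C).2 ++ G) + E.length =
      dl (E ++ C ++ G) + (extractAux fuel E C).1.length := by
  intro fuel
  induction fuel with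
  | zero => intro E C _; exact ⟨rfl, rfl⟩
  | succ fuel ih =>
    intro E C hC
    cases hj : eligNF? C with
    | none =>
      have hres : extractAux (fuel+1) E C = (E, C) := by simp [extractAux, hj]
      rw [hres]
      exact ⟨rfl, rfl⟩
    | some j =>
      have hspec := eligNF?_spec hj
      have key := step_eq E G hC hj
      have hC' := ordDyck_eraseIdx hC hspec.1 hspec.2.1
      have IH := ih (E ++ [C.getD j 0]) (C.eraseIdx j) hC'
      have hres : extractAux (fuel+1) E C
          = extractAux fuel (E ++ [C.getD j 0]) (C.eraseIdx j) := by
        simp [extractAux, hj]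
      rw [hres]
      constructor
      · rw [IH.1, key.2]
      · have h2 := IH.2
        rw [key.1] at h2
        have hlen : (E ++ [C.getD j 0]).length = E.length + 1 := by simp
        rw [hlen] at h2
        omega

lemma ordDyck_take {D : List ℤ} (hD : OrdDyck D) (n : ℕ) (hn : 0 < n) :
    OrdDyck (D.take n) := by
  obtain ⟨hne, hA, h0, hpos⟩ := hD
  have hlen : 0 < D.length := List.length_pos_iff.mpr hne
  have hlt : 0 < (D.take n).length := by
    rw [List.length_take]
    omega
  refine ⟨List.ne_nil_of_length_pos hlt, hA.take n, ?_, fun a ha => hpos a (List.mem_of_mem_take ha)⟩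
  rw [List.getD_eq_getElem _ _ hlt, List.getElem_take, ← List.getD_eq_getElem _ _ hlen]
  exact h0

end PhiAux

/-- **Statistics preserved by `φ₁`.**  If `D` is an ordinary Dyck sequence and
`φ₁(D) = (E, F, G)`, then `area(E ⧺ F ⧺ G) = area(D)` and
`dinv(E ⧺ F ⧺ G) − len(E) = dinv(D)`. -/
theorem phi1_statistics (D : List ℤ) (hD : OrdDyck D) :
    area ((phi1 D).1 ++ (phi1 D).2.1 ++ (phi1 D).2.2) = area D ∧
    dinv ((phi1 D).1 ++ (phi1 D).2.1 ++ (phi1 D).2.2) = dinv D + (phi1 D).1.length := by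
  have hne := hD.1
  simp only [phi1]
  generalize (D.length - 1 - D.reverse.findIdx fun a => decide (a = D.foldr max 0)) = k
  have hC0 : OrdDyck (D.take (k+1)) := PhiAux.ordDyck_take hD (k+1) (by omega)
  have L := PhiAux.loop (D.drop (k+1)) (k+1) [] (D.take (k+1)) hC0
  have hsplit : [] ++ D.take (k+1) ++ D.drop (k+1) = D := by
    rw [List.nil_append, List.take_append_drop]
  rw [hsplit] at L
  constructor
  · exact L.1
  · rw [PhiAux.dinv_eq_dl, PhiAux.dinv_eq_dl]
    have := L.2
    simp only [List.length_nil, Nat.add_zero] at this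
    omega
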